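/- Let a group G act on a set U, let 𝓕 be a G-invariant family of finite subsets of U each of cardinality at most m, and let X be a finite system of representatives for 𝓕 (i.e., X ∩ F ≠ ∅ for all F ∈ 𝓕). Then for every F ∈ 𝓕 there exists f ∈ F such that the orbit Gf is finite and |Gf ∩ X| ≥ |Gf|/m. -/

import Mathlib

open scoped Pointwise

/-- Let a group `G` act on a set `U`, let `𝓕` be a `G`-invariant family of finite subsets of
`U` each of cardinality at most `m`, and let `X` be a finite system of representatives for
`𝓕` (i.e. `X ∩ F ≠ ∅` for all `F ∈ 𝓕`). Then for every `F ∈ 𝓕` there exists `f ∈ F` such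
that the orbit `Gf` is finite and `|Gf ∩ X| ≥ |Gf|/m`. -/
theorem exists_representable_point {G U : Type*} [Group G] [MulAction G U]
    (𝓕 : Set (Set U)) (m : ℕ)
    (hF : ∀ F ∈ 𝓕, F.Finite ∧ F.ncard ≤ m)
    (hinv : ∀ g : G, ∀ F ∈ 𝓕, g • F ∈ 𝓕)
    (X : Set U) (hXfin : X.Finite) (hX : ∀ F ∈ 𝓕, (X ∩ F).Nonempty) :
    ∀ F ∈ 𝓕, ∃ f ∈ F, (MulAction.orbit G f).Finite ∧
      (MulAction.orbit G f).ncard ≤ m * (MulAction.orbit G f ∩ X).ncard := by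
  classical
  intro F hFmem
  obtain ⟨hFfin, hFcard⟩ := hF F hFmem
  set Ff : Finset U := hFfin.toFinset with hFf
  set Xf : Finset U := hXfin.toFinset with hXf
  -- the index set: pairs (f, x) with f ∈ F, x ∈ X, x ∈ orbit f
  set s : Finset (U × U) :=
    (Ff ×ˢ Xf).filter (fun p => p.2 ∈ MulAction.orbit G p.1) with hs
  -- coset representatives
  have gex : ∀ p : U × U, p ∈ s → ∃ g : G, g • p.1 = p.2 := by
    intro p hp
    rw [hs, Finset.mem_filter] at hp
    exact hp.2
  set gg : U × U → G := fun p => if h : ∃ g : G, g • p.1 = p.2 then h.choose else 1 with hgg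
  -- covering
  have hcovers : ⋃ p ∈ s, (gg p) • ((MulAction.stabilizer G p.1 : Subgroup G) : Set G)
      = Set.univ := by
    rw [Set.eq_univ_iff_forall]
    intro a
    obtain ⟨x, hxX, hxF⟩ := hX (a • F) (hinv a F hFmem)
    obtain ⟨f, hf, rfl⟩ := hxF
    have horb : (a • f : U) ∈ MulAction.orbit G f := ⟨a, rfl⟩
    have hpmem : (f, a • f) ∈ s := by
      rw [hs, Finset.mem_filter, Finset.mem_product]
      exact ⟨⟨hFfin.mem_toFinset.2 hf, hXfin.mem_toFinset.2 hxX⟩, horb⟩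
    refine Set.mem_biUnion hpmem ?_
    have hEx : ∃ g : G, g • (f, a • f).1 = (f, a • f).2 := ⟨a, rfl⟩
    have hgval : gg (f, a • f) • f = a • f := by
      rw [hgg]; simp only [dif_pos hEx]; exact hEx.choose_spec
    rw [mem_leftCoset_iff]
    simp only [SetLike.mem_coe, MulAction.mem_stabilizer_iff, mul_smul]
    rw [inv_smul_eq_iff, hgval]
  have hsum := Subgroup.one_le_sum_inv_index_of_leftCoset_cover hcovers
  -- rewrite the sum grouped by the first coordinate
  have hsum2 : (1 : ℚ) ≤ ∑ f ∈ Ff,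
      ((Xf.filter (fun x => x ∈ MulAction.orbit G f)).card : ℚ) *
        ((MulAction.stabilizer G f).index : ℚ)⁻¹ := by
    refine le_trans hsum (le_of_eq ?_)
    rw [hs, Finset.sum_filter, Finset.sum_product]
    refine Finset.sum_congr rfl fun f _ => ?_
    simp only [← Finset.sum_filter, Finset.sum_const, nsmul_eq_mul]
  -- pigeonhole: some f achieves at least 1/m
  have hFne : Ff.Nonempty := by
    obtain ⟨x, _, hxF⟩ := hX F hFmem
    exact ⟨x, hFfin.mem_toFinset.2 hxF⟩
  have hcardF : Ff.card ≤ m := by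
    rw [hFf, ← Set.ncard_eq_toFinset_card F hFfin]; exact hFcard
  have hm : 0 < m := lt_of_lt_of_le (Finset.card_pos.2 hFne) hcardF
  have hpig : ∃ f ∈ Ff, (m : ℚ)⁻¹ ≤
      ((Xf.filter (fun x => x ∈ MulAction.orbit G f)).card : ℚ) *
        ((MulAction.stabilizer G f).index : ℚ)⁻¹ := by
    by_contra hcon
    push_neg at hcon
    have : ∑ f ∈ Ff, ((Xf.filter (fun x => x ∈ MulAction.orbit G f)).card : ℚ) *
        ((MulAction.stabilizer G f).index : ℚ)⁻¹ ≤ Ff.card * (m : ℚ)⁻¹ := by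
      rw [← nsmul_eq_mul, ← Finset.sum_const]
      exact Finset.sum_le_sum fun f hf => (hcon f hf).le
    have hlt : (Ff.card : ℚ) * (m : ℚ)⁻¹ ≤ 1 := by
      rw [← le_div_iff₀ (by positivity), one_div, inv_inv]
      exact_mod_cast hcardF
    -- strict: each term is strictly less, Ff nonempty
    have hstrict : ∑ f ∈ Ff, ((Xf.filter (fun x => x ∈ MulAction.orbit G f)).card : ℚ) *
        ((MulAction.stabilizer G f).index : ℚ)⁻¹ < Ff.card * (m : ℚ)⁻¹ := by
      rw [← nsmul_eq_mul, ← Finset.sum_const]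
      exact Finset.sum_lt_sum_of_nonempty hFne fun f hf => hcon f hf
    exact absurd hsum2 (not_le.2 (lt_of_lt_of_le hstrict hlt))
  obtain ⟨f, hfFf, hkey⟩ := hpig
  have hfF : f ∈ F := hFfin.mem_toFinset.1 hfFf
  -- the stabilizer has finite index
  have hidx : (MulAction.stabilizer G f).index ≠ 0 := by
    intro h0
    rw [h0] at hkey
    simp only [Nat.cast_zero, inv_zero, mul_zero] at hkey
    exact absurd hkey (not_le.2 (by positivity))
  have hfi : (MulAction.stabilizer G f).FiniteIndex := ⟨hidx⟩
  have horbfin : (MulAction.orbit G f).Finite := by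
    have h1 : Finite (G ⧸ MulAction.stabilizer G f) :=
      Subgroup.finite_quotient_of_finiteIndex
    have h2 : Finite (MulAction.orbit G f) :=
      Finite.of_equiv _ (MulAction.orbitEquivQuotientStabilizer G f).symm
    exact Set.toFinite _
  have norbit : (MulAction.orbit G f).ncard = (MulAction.stabilizer G f).index := by
    rw [← Nat.card_coe_set_eq,
      Nat.card_congr (MulAction.orbitEquivQuotientStabilizer G f), Subgroup.index]
  have hXeq : MulAction.orbit G f ∩ X = ↑(Xf.filter (fun x => x ∈ MulAction.orbit G f)) := by
    ext x
    simp [hXf, Set.mem_inter_iff, hXfin.mem_toFinset, and_comm]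
  have nX : (MulAction.orbit G f ∩ X).ncard
      = (Xf.filter (fun x => x ∈ MulAction.orbit G f)).card := by
    rw [hXeq, Set.ncard_coe_finset]
  refine ⟨f, hfF, horbfin, ?_⟩
  rw [norbit, nX]
  have hm' : (0:ℚ) < m := by positivity
  have hi' : (0:ℚ) < ((MulAction.stabilizer G f).index : ℚ) := by
    exact_mod_cast Nat.pos_of_ne_zero hidx
  have hkey' : (1:ℚ)/m ≤ ((Xf.filter (fun x => x ∈ MulAction.orbit G f)).card : ℚ)
      / ((MulAction.stabilizer G f).index : ℚ) := by
    rw [one_div]; rwa [div_eq_mul_inv]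
  have hfinal := (div_le_div_iff₀ hm' hi').1 hkey'
  have : ((MulAction.stabilizer G f).index : ℚ)
      ≤ (m : ℚ) * ((Xf.filter (fun x => x ∈ MulAction.orbit G f)).card : ℚ) := by linarith
  exact_mod_cast this
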